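/- For any sets A and B, if there is an injection from {0,1} × A into {0,1} × B, then there is an injection from A into B. -/

import Mathlib

open Cardinal

lemma two_mul_le_two_mul_cancel {a b : Cardinal} (h : 2 * a ≤ 2 * b) : a ≤ b := by
  rcases lt_or_ge b ℵ₀ with hb | hb
  · obtain ⟨n, hn⟩ := Cardinal.lt_aleph0.1 hb
    have ha : a < ℵ₀ := by
      have h2 : 2 * a < ℵ₀ := h.trans_lt (by
        rw [hn]
        exact Cardinal.mul_lt_aleph0 (Cardinal.nat_lt_aleph0 2) (Cardinal.nat_lt_aleph0 n))
      exact lt_of_le_of_lt (le_mul_left (by norm_num)) h2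
    obtain ⟨m, hm⟩ := Cardinal.lt_aleph0.1 ha
    rw [hm, hn] at h ⊢
    rw [Nat.cast_le]
    have h3 : ((2 * m : ℕ) : Cardinal) ≤ ((2 * n : ℕ) : Cardinal) := by push_cast; exact h
    have := Nat.cast_le.1 h3
    omega
  · calc a ≤ 2 * a := le_mul_left (by norm_num)
      _ ≤ 2 * b := h
      _ = b := Cardinal.mul_eq_right hb ((Cardinal.nat_lt_aleph0 2).le.trans hb |>.trans_eq' (by norm_num)) (by norm_num)

theorem div_ineq_by_two (A B : Type*) :
    Nonempty (Fin 2 × A ↪ Fin 2 × B) → Nonempty (A ↪ B) := by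
  rintro ⟨f⟩
  rw [← Cardinal.lift_mk_le']
  have h0 : Nonempty (Fin 2 × A ↪ Fin 2 × B) := ⟨f⟩
  rw [← Cardinal.lift_mk_le'] at h0
  simp only [Cardinal.mk_prod, Cardinal.lift_mul, Cardinal.lift_lift, Cardinal.mk_fintype,
    Fintype.card_fin, Nat.cast_ofNat, Cardinal.lift_ofNat] at h0
  exact two_mul_le_two_mul_cancel h0
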